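/- arXiv:1605.01591 — 2 statements merged into one kernel-verified Lean document; each statement's English description precedes it below -/
import Mathlib

section
/- Let G be a group with elements g₁,…,g₅ and integers t_{ijk} (1 ≤ i < j < k ≤ 5) satisfying the listed commutator relations. Then for all integers x, y: g₃^x g₁^y = g₁^y g₃^x g₄^{x y t₁₃₄} g₅^{s₂(x) y t₁₃₄ t₃₄₅ + x y t₁₃₅ + x s₂(y) t₁₃₄ t₁₄₅}. -/
/-- `s₂(x) = x(x-1)/2` -/
def s2 (x : ℤ) : ℤ := x * (x - 1) / 2

lemma two_s2 (x : ℤ) : 2 * s2 x = x * (x - 1) := by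
  have h : (2:ℤ) ∣ x * (x - 1) := by
    have := Int.even_mul_succ_self (x - 1)
    exact (by simpa [sub_add_cancel, mul_comm] using this : Even (x * (x - 1))).two_dvd
  exact Int.mul_ediv_cancel' h

lemma s2_succ (x : ℤ) : s2 (x + 1) = s2 x + x := by
  have h1 := two_s2 (x + 1); have h2 := two_s2 x
  exact mul_left_cancel₀ two_ne_zero (by linear_combination h1 - h2)

lemma s2_pred (x : ℤ) : s2 (x - 1) = s2 x - (x - 1) := by
  have h1 := two_s2 (x - 1); have h2 := two_s2 x
  exact mul_left_cancel₀ two_ne_zero (by linear_combination h1 - h2)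

lemma pow_mul_pow_comm {G : Type*} [Group G] (a b z : G)
    (hza : z * a = a * z) (hzb : z * b = b * z) (h : b * a = a * b * z) :
    ∀ x : ℤ, (a * b) ^ x = a ^ x * b ^ x * z ^ s2 x := by
  have Cza : Commute z a := hza
  have Czb : Commute z b := hzb
  have zca : ∀ k : ℤ, z ^ k * a = a * z ^ k := fun k => (Cza.zpow_left k).eq
  have zcb : ∀ k : ℤ, z ^ k * b = b * z ^ k := fun k => (Czb.zpow_left k).eq
  have zca' : ∀ k : ℤ, z ^ k * a⁻¹ = a⁻¹ * z ^ k := fun k => ((Cza.zpow_left k).inv_right).eq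
  have zcb' : ∀ k : ℤ, z ^ k * b⁻¹ = b⁻¹ * z ^ k := fun k => ((Czb.zpow_left k).inv_right).eq
  have h' : a⁻¹ * b * a = b * z := by
    calc a⁻¹ * b * a = a⁻¹ * (b * a) := by group
    _ = a⁻¹ * (a * b * z) := by rw [h]
    _ = b * z := by group
  have hm : ∀ m : ℤ, b ^ m * a = a * (b ^ m * z ^ m) := by
    intro m
    have e1 : (a⁻¹ * b * a) ^ m = a⁻¹ * b ^ m * a := by
      simpa using conj_zpow (i := m) (a := a⁻¹) (b := b)
    have e2 : a⁻¹ * b ^ m * a = b ^ m * z ^ m := by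
      rw [← e1, h', Czb.symm.mul_zpow]
    calc b ^ m * a = a * (a⁻¹ * b ^ m * a) := by group
    _ = a * (b ^ m * z ^ m) := by rw [e2]
  have hminv : ∀ m : ℤ, b ^ m * a⁻¹ = a⁻¹ * (b ^ m * z ^ (-m)) := by
    intro m
    have e4 : (b ^ m * z ^ (-m)) * a = a * b ^ m * a⁻¹ * a := by
      calc (b ^ m * z ^ (-m)) * a = b ^ m * (z ^ (-m) * a) := by group
      _ = b ^ m * (a * z ^ (-m)) := by rw [zca]
      _ = (b ^ m * a) * z ^ (-m) := by group
      _ = (a * (b ^ m * z ^ m)) * z ^ (-m) := by rw [hm]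
      _ = a * b ^ m * a⁻¹ * a := by group
    have e3 : a * b ^ m * a⁻¹ = b ^ m * z ^ (-m) := (mul_right_cancel e4).symm
    calc b ^ m * a⁻¹ = a⁻¹ * (a * b ^ m * a⁻¹) := by group
    _ = a⁻¹ * (b ^ m * z ^ (-m)) := by rw [e3]
  intro x
  induction x using Int.induction_on with
  | zero => norm_num [s2]
  | succ i ih =>
    calc (a*b)^((i:ℤ)+1) = (a*b)^(i:ℤ) * (a*b) := by rw [zpow_add_one]
    _ = (a^(i:ℤ) * b^(i:ℤ) * z^(s2 (i:ℤ))) * (a*b) := by rw [ih]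
    _ = a^(i:ℤ) * b^(i:ℤ) * (z^(s2 (i:ℤ)) * a) * b := by group
    _ = a^(i:ℤ) * b^(i:ℤ) * (a * z^(s2 (i:ℤ))) * b := by rw [zca]
    _ = a^(i:ℤ) * (b^(i:ℤ) * a) * (z^(s2 (i:ℤ)) * b) := by group
    _ = a^(i:ℤ) * (a * (b^(i:ℤ) * z^(i:ℤ))) * (b * z^(s2 (i:ℤ))) := by rw [hm, zcb]
    _ = a^((i:ℤ)+1) * b^(i:ℤ) * (z^(i:ℤ) * b) * z^(s2 (i:ℤ)) := by group
    _ = a^((i:ℤ)+1) * b^(i:ℤ) * (b * z^(i:ℤ)) * z^(s2 (i:ℤ)) := by rw [zcb]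
    _ = a^((i:ℤ)+1) * b^((i:ℤ)+1) * z^(s2 (i:ℤ) + (i:ℤ)) := by group
    _ = a^((i:ℤ)+1) * b^((i:ℤ)+1) * z^(s2 ((i:ℤ)+1)) := by rw [s2_succ]
  | pred i ih =>
    calc (a*b)^(-(i:ℤ)-1) = (a*b)^(-(i:ℤ)) * (a*b)⁻¹ := by rw [zpow_sub_one]
    _ = (a^(-(i:ℤ)) * b^(-(i:ℤ)) * z^(s2 (-(i:ℤ)))) * (b⁻¹ * a⁻¹) := by rw [ih]; group
    _ = a^(-(i:ℤ)) * b^(-(i:ℤ)) * (z^(s2 (-(i:ℤ))) * b⁻¹) * a⁻¹ := by group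
    _ = a^(-(i:ℤ)) * b^(-(i:ℤ)) * (b⁻¹ * z^(s2 (-(i:ℤ)))) * a⁻¹ := by rw [zcb']
    _ = a^(-(i:ℤ)) * b^(-(i:ℤ)-1) * (z^(s2 (-(i:ℤ))) * a⁻¹) := by group
    _ = a^(-(i:ℤ)) * b^(-(i:ℤ)-1) * (a⁻¹ * z^(s2 (-(i:ℤ)))) := by rw [zca']
    _ = a^(-(i:ℤ)) * (b^(-(i:ℤ)-1) * a⁻¹) * z^(s2 (-(i:ℤ))) := by group
    _ = a^(-(i:ℤ)) * (a⁻¹ * (b^(-(i:ℤ)-1) * z^(-(-(i:ℤ)-1)))) * z^(s2 (-(i:ℤ))) := by rw [hminv]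
    _ = a^(-(i:ℤ)-1) * b^(-(i:ℤ)-1) * z^(-(-(i:ℤ)-1) + s2 (-(i:ℤ))) := by group
    _ = a^(-(i:ℤ)-1) * b^(-(i:ℤ)-1) * z^(s2 (-(i:ℤ)-1)) := by
        rw [s2_pred, show -(-(i:ℤ)-1) + s2 (-(i:ℤ)) = s2 (-(i:ℤ)) - (-(i:ℤ)-1) from by ring]

/-- Commutation formula
`g₃^x g₁^y = g₁^y g₃^x g₄^{xy t₁₃₄} g₅^{s₂(x) y t₁₃₄ t₃₄₅ + xy t₁₃₅ + x s₂(y) t₁₃₄ t₁₄₅}`. -/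
theorem g3_g1_power_commutation (G : Type*) [Group G] (g1 g2 g3 g4 g5 : G)
    (t123 t124 t125 t134 t135 t145 t234 t235 t245 t345 : ℤ)
    (h21 : g2⁻¹ * g1⁻¹ * g2 * g1 = g3 ^ t123 * g4 ^ t124 * g5 ^ t125)
    (h31 : g3⁻¹ * g1⁻¹ * g3 * g1 = g4 ^ t134 * g5 ^ t135)
    (h32 : g3⁻¹ * g2⁻¹ * g3 * g2 = g4 ^ t234 * g5 ^ t235)
    (h41 : g4⁻¹ * g1⁻¹ * g4 * g1 = g5 ^ t145)
    (h42 : g4⁻¹ * g2⁻¹ * g4 * g2 = g5 ^ t245)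
    (h43 : g4⁻¹ * g3⁻¹ * g4 * g3 = g5 ^ t345)
    (h51 : g5⁻¹ * g1⁻¹ * g5 * g1 = 1)
    (h52 : g5⁻¹ * g2⁻¹ * g5 * g2 = 1)
    (h53 : g5⁻¹ * g3⁻¹ * g5 * g3 = 1)
    (h54 : g5⁻¹ * g4⁻¹ * g5 * g4 = 1) :
    ∀ x y : ℤ,
      g3 ^ x * g1 ^ y
        = g1 ^ y * g3 ^ x * g4 ^ (x * y * t134)
            * g5 ^ (s2 x * y * t134 * t345 + x * y * t135 + x * s2 y * t134 * t145) := by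
  have c51 : Commute g5 g1 := by
    have e : g5 * g1 = (g1 * g5) * (g5⁻¹ * g1⁻¹ * g5 * g1) := by group
    rw [commute_iff_eq, e, h51, mul_one]
  have c53 : Commute g5 g3 := by
    have e : g5 * g3 = (g3 * g5) * (g5⁻¹ * g3⁻¹ * g5 * g3) := by group
    rw [commute_iff_eq, e, h53, mul_one]
  have c54 : Commute g5 g4 := by
    have e : g5 * g4 = (g4 * g5) * (g5⁻¹ * g4⁻¹ * g5 * g4) := by group
    rw [commute_iff_eq, e, h54, mul_one]
  have z1 : ∀ k : ℤ, g5 ^ k * g1 = g1 * g5 ^ k := fun k => (c51.zpow_left k).eq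
  have z1' : ∀ k : ℤ, g5 ^ k * g1⁻¹ = g1⁻¹ * g5 ^ k := fun k => ((c51.zpow_left k).inv_right).eq
  have z3 : ∀ k : ℤ, g5 ^ k * g3 = g3 * g5 ^ k := fun k => (c53.zpow_left k).eq
  have z4 : ∀ k m : ℤ, g5 ^ k * g4 ^ m = g4 ^ m * g5 ^ k :=
    fun k m => ((c54.zpow_left k).zpow_right m).eq
  have b41 : g1⁻¹ * g4 * g1 = g4 * g5 ^ t145 := by
    calc g1⁻¹ * g4 * g1 = g4 * (g4⁻¹ * g1⁻¹ * g4 * g1) := by group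
    _ = g4 * g5 ^ t145 := by rw [h41]
  have b43 : g3⁻¹ * g4 * g3 = g4 * g5 ^ t345 := by
    calc g3⁻¹ * g4 * g3 = g4 * (g4⁻¹ * g3⁻¹ * g4 * g3) := by group
    _ = g4 * g5 ^ t345 := by rw [h43]
  have b31 : g1⁻¹ * g3 * g1 = g3 * (g4 ^ t134 * g5 ^ t135) := by
    calc g1⁻¹ * g3 * g1 = g3 * (g3⁻¹ * g1⁻¹ * g3 * g1) := by group
    _ = g3 * (g4 ^ t134 * g5 ^ t135) := by rw [h31]
  have c41 : ∀ n : ℤ, g1⁻¹ * g4 ^ n * g1 = g4 ^ n * g5 ^ (n * t145) := by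
    intro n
    have e1 : (g1⁻¹ * g4 * g1) ^ n = g1⁻¹ * g4 ^ n * g1 := by
      simpa using conj_zpow (i := n) (a := g1⁻¹) (b := g4)
    calc g1⁻¹ * g4 ^ n * g1 = (g1⁻¹ * g4 * g1) ^ n := e1.symm
    _ = (g4 * g5 ^ t145) ^ n := by rw [b41]
    _ = g4 ^ n * (g5 ^ t145) ^ n := (c54.zpow_left t145).symm.mul_zpow n
    _ = g4 ^ n * g5 ^ (n * t145) := by rw [← zpow_mul, mul_comm t145 n]
  have c43 : ∀ n : ℤ, g3⁻¹ * g4 ^ n * g3 = g4 ^ n * g5 ^ (n * t345) := by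
    intro n
    have e1 : (g3⁻¹ * g4 * g3) ^ n = g3⁻¹ * g4 ^ n * g3 := by
      simpa using conj_zpow (i := n) (a := g3⁻¹) (b := g4)
    calc g3⁻¹ * g4 ^ n * g3 = (g3⁻¹ * g4 * g3) ^ n := e1.symm
    _ = (g4 * g5 ^ t345) ^ n := by rw [b43]
    _ = g4 ^ n * (g5 ^ t345) ^ n := (c54.zpow_left t345).symm.mul_zpow n
    _ = g4 ^ n * g5 ^ (n * t345) := by rw [← zpow_mul, mul_comm t345 n]
  have m41 : ∀ n : ℤ, g4 ^ n * g1 = g1 * (g4 ^ n * g5 ^ (n * t145)) := by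
    intro n
    calc g4 ^ n * g1 = g1 * (g1⁻¹ * g4 ^ n * g1) := by group
    _ = g1 * (g4 ^ n * g5 ^ (n * t145)) := by rw [c41]
  have m43 : ∀ n : ℤ, g4 ^ n * g3 = g3 * (g4 ^ n * g5 ^ (n * t345)) := by
    intro n
    calc g4 ^ n * g3 = g3 * (g3⁻¹ * g4 ^ n * g3) := by group
    _ = g3 * (g4 ^ n * g5 ^ (n * t345)) := by rw [c43]
  have c41' : ∀ n : ℤ, g1 * g4 ^ n * g1⁻¹ = g4 ^ n * g5 ^ (-(n * t145)) := by
    intro n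
    have e4 : (g4 ^ n * g5 ^ (-(n * t145))) * g1 = g1 * g4 ^ n * g1⁻¹ * g1 := by
      calc (g4 ^ n * g5 ^ (-(n * t145))) * g1 = g4 ^ n * (g5 ^ (-(n * t145)) * g1) := by group
      _ = g4 ^ n * (g1 * g5 ^ (-(n * t145))) := by rw [z1]
      _ = (g4 ^ n * g1) * g5 ^ (-(n * t145)) := by group
      _ = (g1 * (g4 ^ n * g5 ^ (n * t145))) * g5 ^ (-(n * t145)) := by rw [m41]
      _ = g1 * g4 ^ n * g1⁻¹ * g1 := by group
    exact (mul_right_cancel e4).symm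
  have m41' : ∀ n : ℤ, g4 ^ n * g1⁻¹ = g1⁻¹ * (g4 ^ n * g5 ^ (-(n * t145))) := by
    intro n
    calc g4 ^ n * g1⁻¹ = g1⁻¹ * (g1 * g4 ^ n * g1⁻¹) := by group
    _ = g1⁻¹ * (g4 ^ n * g5 ^ (-(n * t145))) := by rw [c41']
  have hzb : g5 ^ (t134 * t345) * (g4 ^ t134 * g5 ^ t135)
      = (g4 ^ t134 * g5 ^ t135) * g5 ^ (t134 * t345) := by
    calc g5 ^ (t134 * t345) * (g4 ^ t134 * g5 ^ t135)
        = (g5 ^ (t134 * t345) * g4 ^ t134) * g5 ^ t135 := by group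
    _ = (g4 ^ t134 * g5 ^ (t134 * t345)) * g5 ^ t135 := by rw [z4]
    _ = (g4 ^ t134 * g5 ^ t135) * g5 ^ (t134 * t345) := by group
  have hcomm : (g4 ^ t134 * g5 ^ t135) * g3
      = g3 * (g4 ^ t134 * g5 ^ t135) * g5 ^ (t134 * t345) := by
    calc (g4 ^ t134 * g5 ^ t135) * g3 = g4 ^ t134 * (g5 ^ t135 * g3) := by group
    _ = g4 ^ t134 * (g3 * g5 ^ t135) := by rw [z3]
    _ = (g4 ^ t134 * g3) * g5 ^ t135 := by group
    _ = (g3 * (g4 ^ t134 * g5 ^ (t134 * t345))) * g5 ^ t135 := by rw [m43]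
    _ = g3 * (g4 ^ t134 * g5 ^ t135) * g5 ^ (t134 * t345) := by group
  have P := pow_mul_pow_comm g3 (g4 ^ t134 * g5 ^ t135) (g5 ^ (t134 * t345))
    (z3 (t134 * t345)) hzb hcomm
  have conj31 : ∀ x : ℤ, g1⁻¹ * g3 ^ x * g1
      = g3 ^ x * g4 ^ (t134 * x) * g5 ^ (t135 * x + t134 * t345 * s2 x) := by
    intro x
    have e1 : (g1⁻¹ * g3 * g1) ^ x = g1⁻¹ * g3 ^ x * g1 := by
      simpa using conj_zpow (i := x) (a := g1⁻¹) (b := g3)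
    have e2 : (g4 ^ t134 * g5 ^ t135) ^ x = g4 ^ (t134 * x) * g5 ^ (t135 * x) := by
      rw [((c54.zpow_right t134).zpow_left t135).symm.mul_zpow, ← zpow_mul, ← zpow_mul]
    calc g1⁻¹ * g3 ^ x * g1 = (g1⁻¹ * g3 * g1) ^ x := e1.symm
    _ = (g3 * (g4 ^ t134 * g5 ^ t135)) ^ x := by rw [b31]
    _ = g3 ^ x * (g4 ^ t134 * g5 ^ t135) ^ x * (g5 ^ (t134 * t345)) ^ (s2 x) := P x
    _ = g3 ^ x * (g4 ^ (t134 * x) * g5 ^ (t135 * x)) * g5 ^ (t134 * t345 * s2 x) := by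
        rw [e2, ← zpow_mul]
    _ = g3 ^ x * g4 ^ (t134 * x) * g5 ^ (t135 * x + t134 * t345 * s2 x) := by group
  have m31 : ∀ x : ℤ, g3 ^ x * g1
      = g1 * (g3 ^ x * g4 ^ (t134 * x) * g5 ^ (t135 * x + t134 * t345 * s2 x)) := by
    intro x
    calc g3 ^ x * g1 = g1 * (g1⁻¹ * g3 ^ x * g1) := by group
    _ = g1 * (g3 ^ x * g4 ^ (t134 * x) * g5 ^ (t135 * x + t134 * t345 * s2 x)) := by rw [conj31]
  have c31' : ∀ x : ℤ, g1 * g3 ^ x * g1⁻¹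
      = g3 ^ x * g4 ^ (-(t134 * x)) * g5 ^ (t134 * x * t145 - (t135 * x + t134 * t345 * s2 x)) := by
    intro x
    have e4 : (g3 ^ x * g4 ^ (-(t134 * x)) * g5 ^ (t134 * x * t145 - (t135 * x + t134 * t345 * s2 x))) * g1
        = g1 * g3 ^ x * g1⁻¹ * g1 := by
      calc (g3 ^ x * g4 ^ (-(t134 * x)) * g5 ^ (t134 * x * t145 - (t135 * x + t134 * t345 * s2 x))) * g1
          = g3 ^ x * g4 ^ (-(t134 * x)) * (g5 ^ (t134 * x * t145 - (t135 * x + t134 * t345 * s2 x)) * g1) := by group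
      _ = g3 ^ x * g4 ^ (-(t134 * x)) * (g1 * g5 ^ (t134 * x * t145 - (t135 * x + t134 * t345 * s2 x))) := by rw [z1]
      _ = g3 ^ x * (g4 ^ (-(t134 * x)) * g1) * g5 ^ (t134 * x * t145 - (t135 * x + t134 * t345 * s2 x)) := by group
      _ = g3 ^ x * (g1 * (g4 ^ (-(t134 * x)) * g5 ^ (-(t134 * x) * t145))) * g5 ^ (t134 * x * t145 - (t135 * x + t134 * t345 * s2 x)) := by rw [m41]
      _ = (g3 ^ x * g1) * g4 ^ (-(t134 * x)) * g5 ^ (-(t134 * x) * t145 + (t134 * x * t145 - (t135 * x + t134 * t345 * s2 x))) := by group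
      _ = (g1 * (g3 ^ x * g4 ^ (t134 * x) * g5 ^ (t135 * x + t134 * t345 * s2 x))) * g4 ^ (-(t134 * x)) * g5 ^ (-(t134 * x) * t145 + (t134 * x * t145 - (t135 * x + t134 * t345 * s2 x))) := by rw [m31]
      _ = g1 * g3 ^ x * g4 ^ (t134 * x) * (g5 ^ (t135 * x + t134 * t345 * s2 x) * g4 ^ (-(t134 * x))) * g5 ^ (-(t134 * x) * t145 + (t134 * x * t145 - (t135 * x + t134 * t345 * s2 x))) := by group
      _ = g1 * g3 ^ x * g4 ^ (t134 * x) * (g4 ^ (-(t134 * x)) * g5 ^ (t135 * x + t134 * t345 * s2 x)) * g5 ^ (-(t134 * x) * t145 + (t134 * x * t145 - (t135 * x + t134 * t345 * s2 x))) := by rw [z4]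
      _ = g1 * g3 ^ x * g5 ^ ((t135 * x + t134 * t345 * s2 x) + (-(t134 * x) * t145 + (t134 * x * t145 - (t135 * x + t134 * t345 * s2 x)))) := by group
      _ = g1 * g3 ^ x * g5 ^ (0:ℤ) := by
          rw [show (t135 * x + t134 * t345 * s2 x) + (-(t134 * x) * t145 + (t134 * x * t145 - (t135 * x + t134 * t345 * s2 x))) = (0:ℤ) from by ring]
      _ = g1 * g3 ^ x * g1⁻¹ * g1 := by group
    exact (mul_right_cancel e4).symm
  have m31' : ∀ x : ℤ, g3 ^ x * g1⁻¹
      = g1⁻¹ * (g3 ^ x * g4 ^ (-(t134 * x)) * g5 ^ (t134 * x * t145 - (t135 * x + t134 * t345 * s2 x))) := by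
    intro x
    calc g3 ^ x * g1⁻¹ = g1⁻¹ * (g1 * g3 ^ x * g1⁻¹) := by group
    _ = g1⁻¹ * (g3 ^ x * g4 ^ (-(t134 * x)) * g5 ^ (t134 * x * t145 - (t135 * x + t134 * t345 * s2 x))) := by rw [c31']
  intro x y
  induction y using Int.induction_on with
  | zero => norm_num [s2]
  | succ i ih =>
    calc g3 ^ x * g1 ^ ((i:ℤ)+1) = (g3 ^ x * g1 ^ (i:ℤ)) * g1 := by rw [zpow_add_one, ← mul_assoc]
    _ = (g1 ^ (i:ℤ) * g3 ^ x * g4 ^ (x * (i:ℤ) * t134)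
          * g5 ^ (s2 x * (i:ℤ) * t134 * t345 + x * (i:ℤ) * t135 + x * s2 (i:ℤ) * t134 * t145)) * g1 := by rw [ih]
    _ = g1 ^ (i:ℤ) * g3 ^ x * g4 ^ (x * (i:ℤ) * t134)
          * (g5 ^ (s2 x * (i:ℤ) * t134 * t345 + x * (i:ℤ) * t135 + x * s2 (i:ℤ) * t134 * t145) * g1) := by group
    _ = g1 ^ (i:ℤ) * g3 ^ x * g4 ^ (x * (i:ℤ) * t134)
          * (g1 * g5 ^ (s2 x * (i:ℤ) * t134 * t345 + x * (i:ℤ) * t135 + x * s2 (i:ℤ) * t134 * t145)) := by rw [z1]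
    _ = g1 ^ (i:ℤ) * g3 ^ x * (g4 ^ (x * (i:ℤ) * t134) * g1)
          * g5 ^ (s2 x * (i:ℤ) * t134 * t345 + x * (i:ℤ) * t135 + x * s2 (i:ℤ) * t134 * t145) := by group
    _ = g1 ^ (i:ℤ) * g3 ^ x * (g1 * (g4 ^ (x * (i:ℤ) * t134) * g5 ^ (x * (i:ℤ) * t134 * t145)))
          * g5 ^ (s2 x * (i:ℤ) * t134 * t345 + x * (i:ℤ) * t135 + x * s2 (i:ℤ) * t134 * t145) := by rw [m41]
    _ = g1 ^ (i:ℤ) * (g3 ^ x * g1)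
          * (g4 ^ (x * (i:ℤ) * t134) * g5 ^ (x * (i:ℤ) * t134 * t145 + (s2 x * (i:ℤ) * t134 * t345 + x * (i:ℤ) * t135 + x * s2 (i:ℤ) * t134 * t145))) := by group
    _ = g1 ^ (i:ℤ) * (g1 * (g3 ^ x * g4 ^ (t134 * x) * g5 ^ (t135 * x + t134 * t345 * s2 x)))
          * (g4 ^ (x * (i:ℤ) * t134) * g5 ^ (x * (i:ℤ) * t134 * t145 + (s2 x * (i:ℤ) * t134 * t345 + x * (i:ℤ) * t135 + x * s2 (i:ℤ) * t134 * t145))) := by rw [m31]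
    _ = g1 ^ ((i:ℤ)+1) * g3 ^ x * g4 ^ (t134 * x)
          * (g5 ^ (t135 * x + t134 * t345 * s2 x) * g4 ^ (x * (i:ℤ) * t134))
          * g5 ^ (x * (i:ℤ) * t134 * t145 + (s2 x * (i:ℤ) * t134 * t345 + x * (i:ℤ) * t135 + x * s2 (i:ℤ) * t134 * t145)) := by group
    _ = g1 ^ ((i:ℤ)+1) * g3 ^ x * g4 ^ (t134 * x)
          * (g4 ^ (x * (i:ℤ) * t134) * g5 ^ (t135 * x + t134 * t345 * s2 x))
          * g5 ^ (x * (i:ℤ) * t134 * t145 + (s2 x * (i:ℤ) * t134 * t345 + x * (i:ℤ) * t135 + x * s2 (i:ℤ) * t134 * t145)) := by rw [z4]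
    _ = g1 ^ ((i:ℤ)+1) * g3 ^ x * g4 ^ (t134 * x + x * (i:ℤ) * t134)
          * g5 ^ ((t135 * x + t134 * t345 * s2 x) + (x * (i:ℤ) * t134 * t145 + (s2 x * (i:ℤ) * t134 * t345 + x * (i:ℤ) * t135 + x * s2 (i:ℤ) * t134 * t145))) := by group
    _ = g1 ^ ((i:ℤ)+1) * g3 ^ x * g4 ^ (x * ((i:ℤ)+1) * t134)
          * g5 ^ (s2 x * ((i:ℤ)+1) * t134 * t345 + x * ((i:ℤ)+1) * t135 + x * s2 ((i:ℤ)+1) * t134 * t145) := by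
        rw [show x * ((i:ℤ)+1) * t134 = t134 * x + x * (i:ℤ) * t134 from by ring,
          show s2 x * ((i:ℤ)+1) * t134 * t345 + x * ((i:ℤ)+1) * t135 + x * s2 ((i:ℤ)+1) * t134 * t145
            = (t135 * x + t134 * t345 * s2 x) + (x * (i:ℤ) * t134 * t145 + (s2 x * (i:ℤ) * t134 * t345 + x * (i:ℤ) * t135 + x * s2 (i:ℤ) * t134 * t145)) from by
              rw [s2_succ]; ring]
  | pred i ih =>
    calc g3 ^ x * g1 ^ (-(i:ℤ)-1) = (g3 ^ x * g1 ^ (-(i:ℤ))) * g1⁻¹ := by rw [zpow_sub_one, ← mul_assoc]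
    _ = (g1 ^ (-(i:ℤ)) * g3 ^ x * g4 ^ (x * -(i:ℤ) * t134)
          * g5 ^ (s2 x * -(i:ℤ) * t134 * t345 + x * -(i:ℤ) * t135 + x * s2 (-(i:ℤ)) * t134 * t145)) * g1⁻¹ := by rw [ih]
    _ = g1 ^ (-(i:ℤ)) * g3 ^ x * g4 ^ (x * -(i:ℤ) * t134)
          * (g5 ^ (s2 x * -(i:ℤ) * t134 * t345 + x * -(i:ℤ) * t135 + x * s2 (-(i:ℤ)) * t134 * t145) * g1⁻¹) := by group
    _ = g1 ^ (-(i:ℤ)) * g3 ^ x * g4 ^ (x * -(i:ℤ) * t134)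
          * (g1⁻¹ * g5 ^ (s2 x * -(i:ℤ) * t134 * t345 + x * -(i:ℤ) * t135 + x * s2 (-(i:ℤ)) * t134 * t145)) := by rw [z1']
    _ = g1 ^ (-(i:ℤ)) * g3 ^ x * (g4 ^ (x * -(i:ℤ) * t134) * g1⁻¹)
          * g5 ^ (s2 x * -(i:ℤ) * t134 * t345 + x * -(i:ℤ) * t135 + x * s2 (-(i:ℤ)) * t134 * t145) := by group
    _ = g1 ^ (-(i:ℤ)) * g3 ^ x * (g1⁻¹ * (g4 ^ (x * -(i:ℤ) * t134) * g5 ^ (-(x * -(i:ℤ) * t134 * t145))))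
          * g5 ^ (s2 x * -(i:ℤ) * t134 * t345 + x * -(i:ℤ) * t135 + x * s2 (-(i:ℤ)) * t134 * t145) := by rw [m41']
    _ = g1 ^ (-(i:ℤ)) * (g3 ^ x * g1⁻¹)
          * (g4 ^ (x * -(i:ℤ) * t134) * g5 ^ (-(x * -(i:ℤ) * t134 * t145) + (s2 x * -(i:ℤ) * t134 * t345 + x * -(i:ℤ) * t135 + x * s2 (-(i:ℤ)) * t134 * t145))) := by group
    _ = g1 ^ (-(i:ℤ)) * (g1⁻¹ * (g3 ^ x * g4 ^ (-(t134 * x)) * g5 ^ (t134 * x * t145 - (t135 * x + t134 * t345 * s2 x))))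
          * (g4 ^ (x * -(i:ℤ) * t134) * g5 ^ (-(x * -(i:ℤ) * t134 * t145) + (s2 x * -(i:ℤ) * t134 * t345 + x * -(i:ℤ) * t135 + x * s2 (-(i:ℤ)) * t134 * t145))) := by rw [m31']
    _ = g1 ^ (-(i:ℤ)-1) * g3 ^ x * g4 ^ (-(t134 * x))
          * (g5 ^ (t134 * x * t145 - (t135 * x + t134 * t345 * s2 x)) * g4 ^ (x * -(i:ℤ) * t134))
          * g5 ^ (-(x * -(i:ℤ) * t134 * t145) + (s2 x * -(i:ℤ) * t134 * t345 + x * -(i:ℤ) * t135 + x * s2 (-(i:ℤ)) * t134 * t145)) := by group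
    _ = g1 ^ (-(i:ℤ)-1) * g3 ^ x * g4 ^ (-(t134 * x))
          * (g4 ^ (x * -(i:ℤ) * t134) * g5 ^ (t134 * x * t145 - (t135 * x + t134 * t345 * s2 x)))
          * g5 ^ (-(x * -(i:ℤ) * t134 * t145) + (s2 x * -(i:ℤ) * t134 * t345 + x * -(i:ℤ) * t135 + x * s2 (-(i:ℤ)) * t134 * t145)) := by rw [z4]
    _ = g1 ^ (-(i:ℤ)-1) * g3 ^ x * g4 ^ (-(t134 * x) + x * -(i:ℤ) * t134)
          * g5 ^ ((t134 * x * t145 - (t135 * x + t134 * t345 * s2 x)) + (-(x * -(i:ℤ) * t134 * t145) + (s2 x * -(i:ℤ) * t134 * t345 + x * -(i:ℤ) * t135 + x * s2 (-(i:ℤ)) * t134 * t145))) := by group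
    _ = g1 ^ (-(i:ℤ)-1) * g3 ^ x * g4 ^ (x * (-(i:ℤ)-1) * t134)
          * g5 ^ (s2 x * (-(i:ℤ)-1) * t134 * t345 + x * (-(i:ℤ)-1) * t135 + x * s2 (-(i:ℤ)-1) * t134 * t145) := by
        rw [show x * (-(i:ℤ)-1) * t134 = -(t134 * x) + x * -(i:ℤ) * t134 from by ring,
          show s2 x * (-(i:ℤ)-1) * t134 * t345 + x * (-(i:ℤ)-1) * t135 + x * s2 (-(i:ℤ)-1) * t134 * t145
            = (t134 * x * t145 - (t135 * x + t134 * t345 * s2 x)) + (-(x * -(i:ℤ) * t134 * t145) + (s2 x * -(i:ℤ) * t134 * t345 + x * -(i:ℤ) * t135 + x * s2 (-(i:ℤ)) * t134 * t145)) from by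
              rw [s2_pred]; ring]
end

section
/- Let G be a group with elements g₂,…,g₅ and integers t₂₃₄, t₂₃₅, t₂₄₅, t₃₄₅ satisfying the listed commutator relations. Then for all integers a₂,…,a₅,b₂,…,b₅: (g₂^{a₂}g₃^{a₃}g₄^{a₄}g₅^{a₅})·(g₂^{b₂}g₃^{b₃}g₄^{b₄}g₅^{b₅}) = g₂^{f₂}g₃^{f₃}g₄^{f₄}g₅^{f₅}, where f₂ = a₂+b₂, f₃ = a₃+b₃, f₄ = a₄+b₄+a₃b₂t₂₃₄, and f₅ = a₅+b₅+a₃b₂t₂₃₅+a₄b₂t₂₄₅+a₄b₃t₃₄₅+a₃s₂(b₂)t₂₃₄t₂₄₅+s₂(a₃)b₂t₂₃₄t₃₄₅+a₃b₂b₃t₂₃₄t₃₄₅. -/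
lemma s2_add_one (n : ℤ) : s2 (n + 1) = s2 n + n := by
  unfold s2
  have h : (n + 1) * (n + 1 - 1) = n * (n - 1) + 2 * n := by ring
  omega

lemma s2_add_neg_one (n : ℤ) : s2 (n + -1) = s2 n - n + 1 := by
  unfold s2
  have h : (n + -1) * (n + -1 - 1) = n * (n - 1) - 2 * n + 2 := by ring
  omega

lemma heis {G : Type*} [Group G] (a b z : G) (hza : Commute z a) (hzb : Commute z b)
    (h : a * b = b * a * z) : ∀ m n : ℤ, a ^ m * b ^ n = b ^ n * a ^ m * z ^ (m * n) := by
  have hinv : a * b⁻¹ = b⁻¹ * a * z⁻¹ := by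
    apply mul_right_cancel (b := b)
    rw [inv_mul_cancel_right, mul_assoc (b⁻¹ * a), hzb.inv_left.eq, ← mul_assoc,
      mul_assoc b⁻¹ a b, h]
    group
  have h1 : ∀ n : ℤ, a * b ^ n = b ^ n * a * z ^ n := by
    intro n
    induction n using Int.induction_on with
    | zero => simp
    | succ k ih =>
        rw [zpow_add_one, ← mul_assoc, ih, zpow_add_one]
        calc b ^ (k:ℤ) * a * z ^ (k:ℤ) * b
            = b ^ (k:ℤ) * (a * (z ^ (k:ℤ) * b)) := by simp [mul_assoc]
          _ = b ^ (k:ℤ) * (a * (b * z ^ (k:ℤ))) := by rw [(hzb.zpow_left (k:ℤ)).eq]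
          _ = b ^ (k:ℤ) * (a * b * z ^ (k:ℤ)) := by rw [mul_assoc a b]
          _ = b ^ (k:ℤ) * (b * a * z * z ^ (k:ℤ)) := by rw [h]
          _ = b ^ (k:ℤ) * (b * a * (z * z ^ (k:ℤ))) := by rw [mul_assoc]
          _ = b ^ (k:ℤ) * (b * a * (z ^ (k:ℤ) * z)) := by
                rw [((Commute.refl z).zpow_right (k:ℤ)).eq]
          _ = b ^ (k:ℤ) * b * a * (z ^ (k:ℤ) * z) := by simp [mul_assoc]
    | pred k ih =>
        rw [zpow_sub_one, ← mul_assoc, ih, zpow_sub_one]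
        calc b ^ (-(k:ℤ)) * a * z ^ (-(k:ℤ)) * b⁻¹
            = b ^ (-(k:ℤ)) * (a * (z ^ (-(k:ℤ)) * b⁻¹)) := by simp [mul_assoc]
          _ = b ^ (-(k:ℤ)) * (a * (b⁻¹ * z ^ (-(k:ℤ)))) := by
                rw [(hzb.inv_right.zpow_left (-(k:ℤ))).eq]
          _ = b ^ (-(k:ℤ)) * (a * b⁻¹ * z ^ (-(k:ℤ))) := by rw [mul_assoc a]
          _ = b ^ (-(k:ℤ)) * (b⁻¹ * a * z⁻¹ * z ^ (-(k:ℤ))) := by rw [hinv]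
          _ = b ^ (-(k:ℤ)) * (b⁻¹ * a * (z⁻¹ * z ^ (-(k:ℤ)))) := by rw [mul_assoc]
          _ = b ^ (-(k:ℤ)) * (b⁻¹ * a * (z ^ (-(k:ℤ)) * z⁻¹)) := by
                rw [((Commute.refl z).inv_left.zpow_right (-(k:ℤ))).eq]
          _ = b ^ (-(k:ℤ)) * b⁻¹ * a * (z ^ (-(k:ℤ)) * z⁻¹) := by simp [mul_assoc]
  have h1inv : ∀ n : ℤ, a⁻¹ * b ^ n = b ^ n * a⁻¹ * z ^ (-n) := by
    intro n
    apply mul_left_cancel (a := a)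
    rw [mul_inv_cancel_left, ← mul_assoc, ← mul_assoc, h1 n]
    symm
    calc b ^ n * a * z ^ n * a⁻¹ * z ^ (-n)
        = b ^ n * a * (z ^ n * a⁻¹) * z ^ (-n) := by rw [mul_assoc (b ^ n * a)]
      _ = b ^ n * a * (a⁻¹ * z ^ n) * z ^ (-n) := by rw [(hza.zpow_left n).inv_right.eq]
      _ = b ^ n := by group
  intro m n
  induction m using Int.induction_on with
  | zero => simp
  | succ k ih =>
      rw [zpow_add_one a, mul_assoc, h1 n, ← mul_assoc, ← mul_assoc, ih]
      calc b ^ n * a ^ (k:ℤ) * z ^ ((k:ℤ) * n) * a * z ^ n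
          = b ^ n * a ^ (k:ℤ) * (z ^ ((k:ℤ) * n) * a) * z ^ n := by
            rw [mul_assoc (b ^ n * a ^ (k:ℤ))]
        _ = b ^ n * a ^ (k:ℤ) * (a * z ^ ((k:ℤ) * n)) * z ^ n := by
            rw [(hza.zpow_left ((k:ℤ) * n)).eq]
        _ = b ^ n * (a ^ (k:ℤ) * a) * (z ^ ((k:ℤ) * n) * z ^ n) := by simp [mul_assoc]
        _ = b ^ n * (a ^ (k:ℤ) * a) * z ^ (((k:ℤ) + 1) * n) := by
            rw [← zpow_add,
              show (k:ℤ) * n + n = ((k:ℤ) + 1) * n from by ring]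
  | pred k ih =>
      rw [zpow_sub_one a, mul_assoc, h1inv n, ← mul_assoc, ← mul_assoc, ih]
      calc b ^ n * a ^ (-(k:ℤ)) * z ^ (-(k:ℤ) * n) * a⁻¹ * z ^ (-n)
          = b ^ n * a ^ (-(k:ℤ)) * (z ^ (-(k:ℤ) * n) * a⁻¹) * z ^ (-n) := by
            rw [mul_assoc (b ^ n * a ^ (-(k:ℤ)))]
        _ = b ^ n * a ^ (-(k:ℤ)) * (a⁻¹ * z ^ (-(k:ℤ) * n)) * z ^ (-n) := by
            rw [(hza.zpow_left (-(k:ℤ) * n)).inv_right.eq]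
        _ = b ^ n * (a ^ (-(k:ℤ)) * a⁻¹) * (z ^ (-(k:ℤ) * n) * z ^ (-n)) := by simp [mul_assoc]
        _ = b ^ n * (a ^ (-(k:ℤ)) * a⁻¹) * z ^ ((-(k:ℤ) - 1) * n) := by
            rw [← zpow_add,
              show -(k:ℤ) * n + -n = (-(k:ℤ) - 1) * n from by ring]

set_option maxHeartbeats 1000000 in
/-- Multiplication polynomials `f₂,…,f₅` for the subgroup `G₂ = ⟨g₂,…,g₅⟩`. -/
theorem multiplication_polynomials_G2 (G : Type*) [Group G] (g2 g3 g4 g5 : G)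
    (t234 t235 t245 t345 : ℤ)
    (h32 : g3⁻¹ * g2⁻¹ * g3 * g2 = g4 ^ t234 * g5 ^ t235)
    (h42 : g4⁻¹ * g2⁻¹ * g4 * g2 = g5 ^ t245)
    (h43 : g4⁻¹ * g3⁻¹ * g4 * g3 = g5 ^ t345)
    (h52 : g5⁻¹ * g2⁻¹ * g5 * g2 = 1)
    (h53 : g5⁻¹ * g3⁻¹ * g5 * g3 = 1)
    (h54 : g5⁻¹ * g4⁻¹ * g5 * g4 = 1) :
    ∀ a2 a3 a4 a5 b2 b3 b4 b5 : ℤ,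
      (g2 ^ a2 * g3 ^ a3 * g4 ^ a4 * g5 ^ a5) * (g2 ^ b2 * g3 ^ b3 * g4 ^ b4 * g5 ^ b5)
        = g2 ^ (a2 + b2) * g3 ^ (a3 + b3) * g4 ^ (a4 + b4 + a3 * b2 * t234)
            * g5 ^ (a5 + b5 + a3 * b2 * t235 + a4 * b2 * t245 + a4 * b3 * t345
                    + a3 * s2 b2 * t234 * t245 + s2 a3 * b2 * t234 * t345
                    + a3 * b2 * b3 * t234 * t345) := by
  intro a2 a3 a4 a5 b2 b3 b4 b5
  have c52 : Commute g5 g2 := by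
    show g5 * g2 = g2 * g5
    have h := congrArg (fun x => g2 * g5 * x) h52
    simpa [mul_assoc] using h
  have c53 : Commute g5 g3 := by
    show g5 * g3 = g3 * g5
    have h := congrArg (fun x => g3 * g5 * x) h53
    simpa [mul_assoc] using h
  have c54 : Commute g5 g4 := by
    show g5 * g4 = g4 * g5
    have h := congrArg (fun x => g4 * g5 * x) h54
    simpa [mul_assoc] using h
  have r32 : g3 * g2 = g2 * g3 * (g4 ^ t234 * g5 ^ t235) := by
    have h := congrArg (fun x => g2 * g3 * x) h32
    simpa [mul_assoc] using h
  have r42 : g4 * g2 = g2 * g4 * g5 ^ t245 := by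
    have h := congrArg (fun x => g2 * g4 * x) h42
    simpa [mul_assoc] using h
  have r43 : g4 * g3 = g3 * g4 * g5 ^ t345 := by
    have h := congrArg (fun x => g3 * g4 * x) h43
    simpa [mul_assoc] using h
  have H42 := heis g4 g2 (g5 ^ t245) (c54.zpow_left t245) (c52.zpow_left t245) r42
  have H43 := heis g4 g3 (g5 ^ t345) (c54.zpow_left t345) (c53.zpow_left t345) r43
  have S42 : ∀ m n : ℤ, g4 ^ m * g2 ^ n = g2 ^ n * (g4 ^ m * g5 ^ (t245 * (m * n))) := by
    intro m n; rw [H42 m n, mul_assoc, ← zpow_mul]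
  have S42' : ∀ (m n : ℤ) (x : G),
      g4 ^ m * (g2 ^ n * x) = g2 ^ n * (g4 ^ m * (g5 ^ (t245 * (m * n)) * x)) := by
    intro m n x; rw [← mul_assoc, S42]; simp only [mul_assoc]
  have S43 : ∀ m n : ℤ, g4 ^ m * g3 ^ n = g3 ^ n * (g4 ^ m * g5 ^ (t345 * (m * n))) := by
    intro m n; rw [H43 m n, mul_assoc, ← zpow_mul]
  have S43' : ∀ (m n : ℤ) (x : G),
      g4 ^ m * (g3 ^ n * x) = g3 ^ n * (g4 ^ m * (g5 ^ (t345 * (m * n)) * x)) := by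
    intro m n x; rw [← mul_assoc, S43]; simp only [mul_assoc]
  have S52 : ∀ m n : ℤ, g5 ^ m * g2 ^ n = g2 ^ n * g5 ^ m := fun m n => (c52.zpow_zpow m n).eq
  have S52' : ∀ (m n : ℤ) (x : G), g5 ^ m * (g2 ^ n * x) = g2 ^ n * (g5 ^ m * x) := by
    intro m n x; rw [← mul_assoc, S52, mul_assoc]
  have S53 : ∀ m n : ℤ, g5 ^ m * g3 ^ n = g3 ^ n * g5 ^ m := fun m n => (c53.zpow_zpow m n).eq
  have S53' : ∀ (m n : ℤ) (x : G), g5 ^ m * (g3 ^ n * x) = g3 ^ n * (g5 ^ m * x) := by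
    intro m n x; rw [← mul_assoc, S53, mul_assoc]
  have S54 : ∀ m n : ℤ, g5 ^ m * g4 ^ n = g4 ^ n * g5 ^ m := fun m n => (c54.zpow_zpow m n).eq
  have S54' : ∀ (m n : ℤ) (x : G), g5 ^ m * (g4 ^ n * x) = g4 ^ n * (g5 ^ m * x) := by
    intro m n x; rw [← mul_assoc, S54, mul_assoc]
  have M2 : ∀ m n : ℤ, g2 ^ m * g2 ^ n = g2 ^ (m + n) := fun m n => (zpow_add g2 m n).symm
  have M2' : ∀ (m n : ℤ) (x : G), g2 ^ m * (g2 ^ n * x) = g2 ^ (m + n) * x := by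
    intro m n x; rw [← mul_assoc, M2]
  have M3 : ∀ m n : ℤ, g3 ^ m * g3 ^ n = g3 ^ (m + n) := fun m n => (zpow_add g3 m n).symm
  have M3' : ∀ (m n : ℤ) (x : G), g3 ^ m * (g3 ^ n * x) = g3 ^ (m + n) * x := by
    intro m n x; rw [← mul_assoc, M3]
  have M4 : ∀ m n : ℤ, g4 ^ m * g4 ^ n = g4 ^ (m + n) := fun m n => (zpow_add g4 m n).symm
  have M4' : ∀ (m n : ℤ) (x : G), g4 ^ m * (g4 ^ n * x) = g4 ^ (m + n) * x := by
    intro m n x; rw [← mul_assoc, M4]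
  have M5 : ∀ m n : ℤ, g5 ^ m * g5 ^ n = g5 ^ (m + n) := fun m n => (zpow_add g5 m n).symm
  have M5' : ∀ (m n : ℤ) (x : G), g5 ^ m * (g5 ^ n * x) = g5 ^ (m + n) * x := by
    intro m n x; rw [← mul_assoc, M5]
  have r32p : g3 ^ (1:ℤ) * g2 ^ (1:ℤ)
      = g2 ^ (1:ℤ) * (g3 ^ (1:ℤ) * (g4 ^ t234 * g5 ^ t235)) := by
    simp only [zpow_one]; rw [r32]; simp only [mul_assoc]
  have r32z : ∀ x : G, g3 ^ (1:ℤ) * (g2 ^ (1:ℤ) * x)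
      = g2 ^ (1:ℤ) * (g3 ^ (1:ℤ) * (g4 ^ t234 * (g5 ^ t235 * x))) := by
    intro x; rw [← mul_assoc, r32p]; simp only [mul_assoc]
  have Bpm : g3 ^ (1:ℤ) * g2 ^ (-1:ℤ)
      = g2 ^ (-1:ℤ) * (g3 ^ (1:ℤ) * (g4 ^ (-t234) * g5 ^ (t234 * t245 - t235))) := by
    apply mul_right_cancel (b := g2 ^ (1:ℤ))
    simp only [mul_assoc, r32z, r32p, S42, S42', S52, S52', S53, S53', S54, S54',
      M2, M2', M3, M3', M4, M4', M5, M5']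
    ring_nf
    simp
  have Bpm' : ∀ x : G, g3 ^ (1:ℤ) * (g2 ^ (-1:ℤ) * x)
      = g2 ^ (-1:ℤ) * (g3 ^ (1:ℤ) * (g4 ^ (-t234) * (g5 ^ (t234 * t245 - t235) * x))) := by
    intro x; rw [← mul_assoc, Bpm]; simp only [mul_assoc]
  have Bmp : g3 ^ (-1:ℤ) * g2 ^ (1:ℤ)
      = g2 ^ (1:ℤ) * (g3 ^ (-1:ℤ) * (g4 ^ (-t234) * g5 ^ (t234 * t345 - t235))) := by
    apply mul_left_cancel (a := g3 ^ (1:ℤ))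
    simp only [mul_assoc, r32z, r32p, S42, S42', S43, S43', S52, S52', S53, S53', S54, S54',
      M2, M2', M3, M3', M4, M4', M5, M5']
    ring_nf
    simp
  have Bmp' : ∀ x : G, g3 ^ (-1:ℤ) * (g2 ^ (1:ℤ) * x)
      = g2 ^ (1:ℤ) * (g3 ^ (-1:ℤ) * (g4 ^ (-t234) * (g5 ^ (t234 * t345 - t235) * x))) := by
    intro x; rw [← mul_assoc, Bmp]; simp only [mul_assoc]
  have Bmm : g3 ^ (-1:ℤ) * g2 ^ (-1:ℤ)
      = g2 ^ (-1:ℤ) * (g3 ^ (-1:ℤ) * (g4 ^ t234 * g5 ^ (t235 - t234 * t245 - t234 * t345))) := by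
    apply mul_left_cancel (a := g3 ^ (1:ℤ))
    simp only [mul_assoc, Bpm, Bpm', S42, S42', S43, S43', S52, S52', S53, S53', S54, S54',
      M2, M2', M3, M3', M4, M4', M5, M5']
    ring_nf
    simp
  have Bmm' : ∀ x : G, g3 ^ (-1:ℤ) * (g2 ^ (-1:ℤ) * x)
      = g2 ^ (-1:ℤ) * (g3 ^ (-1:ℤ) * (g4 ^ t234 * (g5 ^ (t235 - t234 * t245 - t234 * t345) * x))) := by
    intro x; rw [← mul_assoc, Bmm]; simp only [mul_assoc]
  have LP : ∀ n : ℤ, g3 ^ (1:ℤ) * g2 ^ n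
      = g2 ^ n * (g3 ^ (1:ℤ) * (g4 ^ (n * t234) * g5 ^ (n * t235 + s2 n * (t234 * t245)))) := by
    intro n
    induction n using Int.induction_on with
    | zero => norm_num [s2]
    | succ k ih =>
        rw [zpow_add g2 (k:ℤ) 1, ← mul_assoc, ih]
        simp only [mul_assoc, r32z, r32p, S42, S42', S52, S52', S53, S53', S54, S54',
          M2, M2', M3, M3', M4, M4', M5, M5', s2_add_one]
        ring_nf
    | pred k ih =>
        rw [show -(k:ℤ) - 1 = -(k:ℤ) + -1 from by ring,
          zpow_add g2 (-(k:ℤ)) (-1), ← mul_assoc, ih]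
        simp only [mul_assoc, Bpm, Bpm', S42, S42', S52, S52', S53, S53', S54, S54',
          M2, M2', M3, M3', M4, M4', M5, M5', s2_add_neg_one]
        ring_nf
  have LM : ∀ n : ℤ, g3 ^ (-1:ℤ) * g2 ^ n
      = g2 ^ n * (g3 ^ (-1:ℤ) * (g4 ^ (-(n * t234))
          * g5 ^ (-(n * t235) - s2 n * (t234 * t245) + n * (t234 * t345)))) := by
    intro n
    induction n using Int.induction_on with
    | zero => norm_num [s2]
    | succ k ih =>
        rw [zpow_add g2 (k:ℤ) 1, ← mul_assoc, ih]
        simp only [mul_assoc, Bmp, Bmp', S42, S42', S52, S52', S53, S53', S54, S54',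
          M2, M2', M3, M3', M4, M4', M5, M5', s2_add_one]
        ring_nf
    | pred k ih =>
        rw [show -(k:ℤ) - 1 = -(k:ℤ) + -1 from by ring,
          zpow_add g2 (-(k:ℤ)) (-1), ← mul_assoc, ih]
        simp only [mul_assoc, Bmm, Bmm', S42, S42', S52, S52', S53, S53', S54, S54',
          M2, M2', M3, M3', M4, M4', M5, M5', s2_add_neg_one]
        ring_nf
  have H32 : ∀ m n : ℤ, g3 ^ m * g2 ^ n
      = g2 ^ n * (g3 ^ m * (g4 ^ (m * n * t234)
          * g5 ^ (m * n * t235 + m * s2 n * (t234 * t245) + s2 m * n * (t234 * t345)))) := by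
    intro m n
    induction m using Int.induction_on with
    | zero => norm_num [s2]
    | succ k ih =>
        rw [zpow_add g3 (k:ℤ) 1, mul_assoc, LP n, ← mul_assoc, ih]
        simp only [mul_assoc, S42, S42', S43, S43', S52, S52', S53, S53', S54, S54',
          M2, M2', M3, M3', M4, M4', M5, M5', s2_add_one]
        ring_nf
    | pred k ih =>
        rw [show -(k:ℤ) - 1 = -(k:ℤ) + -1 from by ring,
          zpow_add g3 (-(k:ℤ)) (-1), mul_assoc, LM n, ← mul_assoc, ih]
        simp only [mul_assoc, S42, S42', S43, S43', S52, S52', S53, S53', S54, S54',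
          M2, M2', M3, M3', M4, M4', M5, M5', s2_add_neg_one]
        ring_nf
  have H32' : ∀ (m n : ℤ) (x : G), g3 ^ m * (g2 ^ n * x)
      = g2 ^ n * (g3 ^ m * (g4 ^ (m * n * t234)
          * (g5 ^ (m * n * t235 + m * s2 n * (t234 * t245) + s2 m * n * (t234 * t345)) * x))) := by
    intro m n x; rw [← mul_assoc, H32]; simp only [mul_assoc]
  simp only [mul_assoc, H32, H32', S42, S42', S43, S43', S52, S52', S53, S53', S54, S54',
    M2, M2', M3, M3', M4, M4', M5, M5']
  ring_nf
end
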